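/- Let V = C^{M+N} with |i| = 0 for i ≤ M, |i| = 1 for i > M, and let c: V⊗V → V⊗V be the graded permutation v_i⊗v_j ↦ (−1)^{|i||j|} v_j⊗v_i. Then c is an involution (c² = id), and for the Perk–Schultz matrix R = R^{M|N}_{r,s}, the matrix R' := c R^{-1} c satisfies: R' is again of Perk–Schultz form, with diagonal entries on E_{ii}⊗E_{ii} equal to r^{-1} for i ≤ M and s^{-1} for i > M. -/

import Mathlib

open Matrix
open scoped Kronecker

noncomputable section

/-- parity of an index: 0 if `i < M` (even), 1 otherwise (odd). -/
def par (M : ℕ) {n : ℕ} (i : Fin n) : ℕ := if (i : ℕ) < M then 0 else 1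

/-- matrix unit `E_{ij}`. -/
def E {n : ℕ} (i j : Fin n) : Matrix (Fin n) (Fin n) ℂ := Matrix.single i j 1

/-- the Perk–Schultz matrix `R^{M|N}_{r,s}`. -/
def PS (n M : ℕ) (r s : ℂ) : Matrix (Fin n × Fin n) (Fin n × Fin n) ℂ :=
  (∑ i : Fin n, (if (i : ℕ) < M then r else s) • (E i i ⊗ₖ E i i))
  + (∑ i : Fin n, ∑ j : Fin n, (if j < i then (1 : ℂ) else 0) • (E i i ⊗ₖ E j j))
  + (∑ i : Fin n, ∑ j : Fin n, (if i < j then r * s else 0) • (E i i ⊗ₖ E j j))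
  + (∑ i : Fin n, ∑ j : Fin n,
      (if i < j then (r - s) * (-1 : ℂ) ^ (par M i) else 0) • (E j i ⊗ₖ E i j))

/-- the graded permutation `c : v_i⊗v_j ↦ (−1)^{|i||j|} v_j⊗v_i`, as a matrix. -/
def cM (n M : ℕ) : Matrix (Fin n × Fin n) (Fin n × Fin n) ℂ :=
  fun p q => if p.1 = q.2 ∧ p.2 = q.1 then (-1 : ℂ) ^ (par M q.1 * par M q.2) else 0

lemma E_apply {n : ℕ} (i j a b : Fin n) : E i j a b = if i = a ∧ j = b then 1 else 0 := by
  rw [E, Matrix.single]; rfl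

lemma S1 {n : ℕ} (f : Fin n → ℂ) (a b c d : Fin n) :
    (∑ i : Fin n, f i • (E i i ⊗ₖ E i i)) (a,b) (c,d)
      = if b = a ∧ c = a ∧ d = a then f a else 0 := by
  simp only [Matrix.sum_apply, Matrix.smul_apply, Matrix.kroneckerMap_apply, E_apply,
    smul_eq_mul]
  rw [Finset.sum_eq_single a]
  · by_cases h1 : b = a <;> by_cases h2 : c = a <;> by_cases h3 : d = a <;> simp_all <;> try (intros; simp_all)
  · intro i _ hi; simp [hi]
  · intro h; exact absurd (Finset.mem_univ a) h

lemma S2 {n : ℕ} (f : Fin n → Fin n → ℂ) (a b c d : Fin n) :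
    (∑ i : Fin n, ∑ j : Fin n, f i j • (E i i ⊗ₖ E j j)) (a,b) (c,d)
      = if c = a ∧ d = b then f a b else 0 := by
  simp only [Matrix.sum_apply, Matrix.smul_apply, Matrix.kroneckerMap_apply, E_apply,
    smul_eq_mul]
  rw [Finset.sum_eq_single a]
  · rw [Finset.sum_eq_single b]
    · by_cases h2 : c = a <;> by_cases h3 : d = b <;> simp_all <;> try (intros; simp_all)
    · intro j _ hj; simp [hj]
    · intro h; exact absurd (Finset.mem_univ b) h
  · intro i _ hi; simp [hi]
  · intro h; exact absurd (Finset.mem_univ a) h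

lemma S4 {n : ℕ} (f : Fin n → Fin n → ℂ) (a b c d : Fin n) :
    (∑ i : Fin n, ∑ j : Fin n, f i j • (E j i ⊗ₖ E i j)) (a,b) (c,d)
      = if c = b ∧ d = a then f b a else 0 := by
  simp only [Matrix.sum_apply, Matrix.smul_apply, Matrix.kroneckerMap_apply, E_apply,
    smul_eq_mul]
  rw [Finset.sum_eq_single b]
  · rw [Finset.sum_eq_single a]
    · by_cases h2 : c = b <;> by_cases h3 : d = a <;> simp_all <;> try (intros; simp_all)
    · intro j _ hj; simp [hj]
    · intro h; exact absurd (Finset.mem_univ a) h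
  · intro i _ hi; simp [hi]
  · intro h; exact absurd (Finset.mem_univ b) h

lemma PS_apply (n M : ℕ) (r s : ℂ) (a b c d : Fin n) :
    PS n M r s (a,b) (c,d) =
      (if c = a ∧ d = b then
        (if a = b then (if (a:ℕ) < M then r else s) else if b < a then 1 else r*s) else 0)
      + (if c = b ∧ d = a ∧ b < a then (r-s)*(-1:ℂ)^(par M b) else 0) := by
  simp only [PS, Matrix.add_apply, S1, S2, S4]
  rcases lt_trichotomy a b with h|h|h
  · have h1 := h.ne; have h1' := h.ne'; have h0 : ¬ _ < _ := lt_asymm h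
    by_cases h2 : c = a <;> by_cases h3 : d = b <;> by_cases h4 : c = b <;>
      by_cases h5 : d = a <;> simp_all [lt_asymm h, h] <;> try (intros; simp_all)
  · subst h
    by_cases h2 : c = a <;> by_cases h5 : d = a <;> simp_all [lt_irrefl] <;> try (intros; simp_all)
  · have h1 := h.ne; have h1' := h.ne'; have h0 : ¬ _ < _ := lt_asymm h
    by_cases h2 : c = a <;> by_cases h3 : d = b <;> by_cases h4 : c = b <;>
      by_cases h5 : d = a <;> simp_all [lt_asymm h, h] <;> try (intros; simp_all)

def Rinv (n M : ℕ) (r s : ℂ) : Matrix (Fin n × Fin n) (Fin n × Fin n) ℂ :=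
  fun p q =>
    (if q.1 = p.1 ∧ q.2 = p.2 then
      (if p.1 = p.2 then (if (p.1:ℕ) < M then r⁻¹ else s⁻¹)
        else if p.2 < p.1 then 1 else (r*s)⁻¹) else 0)
    + (if q.1 = p.2 ∧ q.2 = p.1 ∧ p.2 < p.1
        then -((r-s)*(-1:ℂ)^(par M p.2))/(r*s) else 0)

lemma sum_sum_ite3 {n : ℕ} (a b : Fin n) (P : Prop) [Decidable P] (D : ℂ)
    (g : Fin n → Fin n → ℂ) :
    (∑ e : Fin n, ∑ f : Fin n, (if e = a ∧ f = b ∧ P then D else 0) * g e f)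
      = if P then D * g a b else 0 := by
  rw [Finset.sum_eq_single a]
  · rw [Finset.sum_eq_single b]
    · by_cases hP : P <;> simp [hP]
    · intro f _ hf; simp [hf]
    · intro h; exact absurd (Finset.mem_univ b) h
  · intro e _ he; simp [he]
  · intro h; exact absurd (Finset.mem_univ a) h

lemma sum_sum_ite2 {n : ℕ} (a b : Fin n) (D : ℂ) (g : Fin n → Fin n → ℂ) :
    (∑ e : Fin n, ∑ f : Fin n, (if e = a ∧ f = b then D else 0) * g e f) = D * g a b := by
  have := sum_sum_ite3 a b True D g
  simpa using this

lemma PS_mul_Rinv (n M : ℕ) (r s : ℂ) (hr : r ≠ 0) (hs : s ≠ 0) :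
    PS n M r s * Rinv n M r s = 1 := by
  ext ⟨a, b⟩ ⟨c, d⟩
  rw [Matrix.mul_apply, Fintype.sum_prod_type]
  simp only [PS_apply, add_mul, Finset.sum_add_distrib, sum_sum_ite3, sum_sum_ite2]
  rw [Matrix.one_apply]
  simp only [Rinv, Prod.mk.injEq]
  rcases lt_trichotomy a b with h|h|h
  · have h1 := h.ne; have h1' := h.ne'; have h0 : ¬ _ < _ := lt_asymm h
    by_cases h2 : c = a <;> by_cases h3 : d = b <;> by_cases h4 : c = b <;>
      by_cases h5 : d = a <;> simp_all [lt_asymm h, h] <;>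
      (try simp_all [eq_comm]) <;> (try field_simp) <;> (try ring) <;> (try simp [pow_mul, negpow_pow_sq])
  · subst h
    by_cases h2 : c = a <;> by_cases h5 : d = a <;> simp_all [lt_irrefl] <;>
      (try simp_all [eq_comm]) <;> (try field_simp) <;> (try ring) <;> (try simp [pow_mul, negpow_pow_sq])
  · have h1 := h.ne; have h1' := h.ne'; have h0 : ¬ _ < _ := lt_asymm h
    by_cases h2 : c = a <;> by_cases h3 : d = b <;> by_cases h4 : c = b <;>
      by_cases h5 : d = a <;> simp_all [lt_asymm h, h] <;>
      (try simp_all [eq_comm]) <;> (try field_simp) <;> (try ring) <;> (try simp [pow_mul, negpow_pow_sq])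


lemma negpow_sq (k : ℕ) : (-1 : ℂ) ^ k * (-1) ^ k = 1 := by
  rw [← pow_add]; exact Even.neg_one_pow ⟨k, rfl⟩

lemma cM_mul (n M : ℕ) (A : Matrix (Fin n × Fin n) (Fin n × Fin n) ℂ) (p q : Fin n × Fin n) :
    (cM n M * A) p q = (-1 : ℂ) ^ (par M p.1 * par M p.2) * A (p.2, p.1) q := by
  rw [Matrix.mul_apply]
  rw [Finset.sum_eq_single ((p.2, p.1) : Fin n × Fin n)]
  · simp [cM, Nat.mul_comm]
  · intro y _ hy
    have : ¬ (p.1 = y.2 ∧ p.2 = y.1) := by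
      rintro ⟨h1, h2⟩; exact hy (Prod.ext h2.symm h1.symm)
    simp [cM, this]
  · intro h; exact absurd (Finset.mem_univ _) h

lemma mul_cM (n M : ℕ) (A : Matrix (Fin n × Fin n) (Fin n × Fin n) ℂ) (p q : Fin n × Fin n) :
    (A * cM n M) p q = A p (q.2, q.1) * (-1 : ℂ) ^ (par M q.1 * par M q.2) := by
  rw [Matrix.mul_apply]
  rw [Finset.sum_eq_single ((q.2, q.1) : Fin n × Fin n)]
  · simp [cM]
  · intro y _ hy
    have : ¬ (y.1 = q.2 ∧ y.2 = q.1) := by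
      rintro ⟨h1, h2⟩; exact hy (Prod.ext h1 h2)
    simp [cM, this]
  · intro h; exact absurd (Finset.mem_univ _) h

lemma cM_mul_cM (n M : ℕ) : cM n M * cM n M = 1 := by
  ext p q
  rw [cM_mul]
  by_cases h : p = q
  · subst h
    simp [cM, Matrix.one_apply, negpow_sq, Nat.mul_comm]
  · have : ¬ ((p.2 : Fin n) = q.2 ∧ (p.1 : Fin n) = q.1) := by
      rintro ⟨h1, h2⟩; exact h (Prod.ext h2 h1)
    simp [cM, this, Matrix.one_apply, h]

lemma negpow_pow_sq (a b : ℕ) : (((-1:ℂ)^a)^b)^2 = 1 := by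
  rw [← pow_mul, ← pow_mul]; exact Even.neg_one_pow ⟨a*b, by ring⟩

lemma negpow_conj (k : ℕ) (x : ℂ) : (-1 : ℂ) ^ k * x * (-1) ^ k = x := by
  rw [mul_comm ((-1 : ℂ) ^ k) x, mul_assoc, negpow_sq, mul_one]

lemma conj_Rinv (n M : ℕ) (r s : ℂ) :
    cM n M * Rinv n M r s * cM n M
      = (∑ i : Fin n, ∑ j : Fin n,
          (if i = j then (if (i:ℕ) < M then r⁻¹ else s⁻¹)
            else if i < j then 1 else (r*s)⁻¹) • (E i i ⊗ₖ E j j))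
        + (∑ i : Fin n, ∑ j : Fin n,
            (if i ≠ j then (if j < i then -((r-s)*(-1:ℂ)^(par M j))/(r*s) else 0) else 0)
              • (E j i ⊗ₖ E i j)) := by
  ext ⟨A, B⟩ ⟨C, D⟩
  rw [Matrix.add_apply, S2, S4, mul_cM, cM_mul]
  simp only [Rinv, Prod.mk.injEq]
  rcases lt_trichotomy A B with h|h|h
  · have h1 := h.ne; have h1' := h.ne'; have h0 : ¬ _ < _ := lt_asymm h
    by_cases h2 : C = A <;> by_cases h3 : D = B <;> by_cases h4 : C = B <;>
      by_cases h5 : D = A <;>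
      simp_all [lt_asymm h, h, Nat.mul_comm, negpow_conj] <;>
      (try simp_all [eq_comm]) <;> (try field_simp) <;> (try ring) <;> (try simp [pow_mul, negpow_pow_sq])
  · subst h
    by_cases h2 : C = A <;> by_cases h5 : D = A <;>
      simp_all [lt_irrefl, Nat.mul_comm, negpow_conj] <;>
      (try simp_all [eq_comm]) <;> (try field_simp) <;> (try ring) <;> (try simp [pow_mul, negpow_pow_sq])
  · have h1 := h.ne; have h1' := h.ne'; have h0 : ¬ _ < _ := lt_asymm h
    by_cases h2 : C = A <;> by_cases h3 : D = B <;> by_cases h4 : C = B <;>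
      by_cases h5 : D = A <;>
      simp_all [lt_asymm h, h, Nat.mul_comm, negpow_conj] <;>
      (try simp_all [eq_comm]) <;> (try field_simp) <;> (try ring) <;> (try simp [pow_mul, negpow_pow_sq])

/-- `c` is an involution, and `R' = c R⁻¹ c` is again of Perk–Schultz form
(a linear combination of `E_{ii}⊗E_{jj}` and `E_{ji}⊗E_{ij}` for `i ≠ j`), with the
coefficient of `E_{ii}⊗E_{ii}` equal to `r⁻¹` for `i ≤ M` and `s⁻¹` for `i > M`. -/
theorem stmt17 (M N : ℕ) (r s : ℂ) (hr : r ≠ 0) (hs : s ≠ 0) (hrs : r + s ≠ 0) :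
    cM (M + N) M * cM (M + N) M = 1 ∧
    ∃ a b : Fin (M + N) → Fin (M + N) → ℂ,
      (cM (M + N) M * (PS (M + N) M r s)⁻¹ * cM (M + N) M
        = (∑ i : Fin (M + N), ∑ j : Fin (M + N), a i j • (E i i ⊗ₖ E j j))
          + (∑ i : Fin (M + N), ∑ j : Fin (M + N),
              (if i ≠ j then b i j else 0) • (E j i ⊗ₖ E i j))) ∧
      ∀ i : Fin (M + N), a i i = if (i : ℕ) < M then r⁻¹ else s⁻¹ := by
  refine ⟨cM_mul_cM _ _, ?_⟩
  refine ⟨fun i j => if i = j then (if (i:ℕ) < M then r⁻¹ else s⁻¹)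
      else if i < j then 1 else (r*s)⁻¹,
    fun i j => if j < i then -((r-s)*(-1:ℂ)^(par M j))/(r*s) else 0, ?_, ?_⟩
  · rw [Matrix.inv_eq_right_inv (PS_mul_Rinv (M+N) M r s hr hs)]
    exact conj_Rinv (M+N) M r s
  · intro i; simp

end
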